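/- arXiv:1204.0502 — 3 statements merged into one kernel-verified Lean document; each statement's English description precedes it below -/
import Mathlib

section
/- Let $k \geq 1$, let $\psi, \phi$ be Dirichlet characters, and set $\sigma(n) = \sum_{ad = n} \psi(a)\phi(d)d^{k-1}$. Then for all positive integers $m, n$: $\sigma(m)\sigma(n) = \sum_{d \mid \gcd(m,n)} \psi(d)\phi(d) d^{k-1} \sigma(mn/d^2)$. -/
theorem twisted_divisor_sum_hecke_relation
    (k : ℕ) (hk : 1 ≤ k) (N₁ N₂ : ℕ)
    (ψ : DirichletCharacter ℂ N₁) (φ : DirichletCharacter ℂ N₂)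
    (σ : ℕ → ℂ)
    (hσ : ∀ n : ℕ, σ n = ∑ d ∈ n.divisors, ψ ((n / d : ℕ)) * φ (d : ℕ) * (d : ℂ) ^ (k - 1))
    (m n : ℕ) (hm : 0 < m) (hn : 0 < n) :
    σ m * σ n =
      ∑ d ∈ (Nat.gcd m n).divisors, ψ (d : ℕ) * φ (d : ℕ) * (d : ℂ) ^ (k - 1) * σ (m * n / d ^ 2) := by
  have hm0 : m ≠ 0 := hm.ne'
  have hn0 : n ≠ 0 := hn.ne'
  have hmn0 : m * n ≠ 0 := mul_ne_zero hm0 hn0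
  set G : ℕ → ℂ := fun t => ψ ((m * n / t : ℕ)) * φ (t : ℕ) * (t : ℂ) ^ (k - 1) with hG
  have key1 : σ m * σ n = ∑ x ∈ m.divisors ×ˢ n.divisors, G (x.1 * x.2) := by
    rw [hσ m, hσ n, Finset.sum_mul_sum, Finset.sum_product]
    refine Finset.sum_congr rfl fun a ha => Finset.sum_congr rfl fun b hb => ?_
    obtain ⟨ham, -⟩ := Nat.mem_divisors.mp ha
    obtain ⟨hbn, -⟩ := Nat.mem_divisors.mp hb
    simp only [hG]
    rw [← Nat.div_mul_div_comm ham hbn]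
    push_cast
    rw [map_mul, map_mul, mul_pow]
    ring
  have key2 : (∑ d ∈ (Nat.gcd m n).divisors, ψ (d : ℕ) * φ (d : ℕ) * (d : ℂ) ^ (k - 1) * σ (m * n / d ^ 2))
      = ∑ x ∈ (Nat.gcd m n).divisors.sigma (fun d => (m * n / d ^ 2).divisors), G (x.1 * x.2) := by
    rw [Finset.sum_sigma]
    refine Finset.sum_congr rfl fun d hd => ?_
    obtain ⟨hdg, -⟩ := Nat.mem_divisors.mp hd
    have hdm : d ∣ m := hdg.trans (Nat.gcd_dvd_left m n)
    have hdn : d ∣ n := hdg.trans (Nat.gcd_dvd_right m n)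
    have hd0 : 0 < d := Nat.pos_of_mem_divisors hd
    have hd2 : d ^ 2 ∣ m * n := by rw [pow_two]; exact mul_dvd_mul hdm hdn
    rw [hσ (m * n / d ^ 2), Finset.mul_sum]
    refine Finset.sum_congr rfl fun e he => ?_
    obtain ⟨hede, -⟩ := Nat.mem_divisors.mp he
    have he0 : 0 < e := Nat.pos_of_mem_divisors he
    have hd2e : d ^ 2 * e ∣ m * n := (Nat.dvd_div_iff_mul_dvd hd2).mp hede
    have h1 : m * n / d ^ 2 / e = m * n / (d ^ 2 * e) := Nat.div_div_eq_div_mul _ _ _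
    have h2 : d * (m * n / (d ^ 2 * e)) = m * n / (d * e) := by
      obtain ⟨q, hq⟩ := hd2e
      rw [hq, Nat.mul_div_cancel_left q (by positivity)]
      have h3 : d ^ 2 * e * q = d * e * (d * q) := by ring
      rw [h3, Nat.mul_div_cancel_left _ (by positivity : 0 < d * e)]
    simp only [hG]
    rw [h1, ← h2]
    push_cast
    rw [map_mul, map_mul, mul_pow]
    ring
  rw [key1, key2]
  refine Finset.sum_nbij'
    (fun x => ⟨Nat.gcd (m / x.1) x.2, x.1 * x.2 / Nat.gcd (m / x.1) x.2⟩)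
    (fun y => (Nat.gcd m (y.1 * y.2) / y.1, y.1 ^ 2 * y.2 / Nat.gcd m (y.1 * y.2)))
    ?_ ?_ ?_ ?_ ?_
  · -- forward membership
    rintro ⟨a, b⟩ hab
    simp only [Finset.mem_product, Nat.mem_divisors] at hab
    obtain ⟨⟨ham, -⟩, hbn, -⟩ := hab
    have ha0 : 0 < a := Nat.pos_of_dvd_of_pos ham hm
    have hb0 : 0 < b := Nat.pos_of_dvd_of_pos hbn hn
    set d := Nat.gcd (m / a) b with hd
    have hd0 : 0 < d := Nat.gcd_pos_of_pos_right _ hb0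
    have hdm : d ∣ m := (Nat.gcd_dvd_left _ _).trans (Nat.div_dvd_of_dvd ham)
    have hdn : d ∣ n := (Nat.gcd_dvd_right _ _).trans hbn
    have hd2 : d ^ 2 ∣ m * n := by rw [pow_two]; exact mul_dvd_mul hdm hdn
    have hdab : d ∣ a * b := Dvd.dvd.mul_left (Nat.gcd_dvd_right _ _) a
    have habmn : a * b ∣ m * n := mul_dvd_mul ham hbn
    simp only [Finset.mem_sigma, Nat.mem_divisors]
    refine ⟨⟨Nat.dvd_gcd hdm hdn, Nat.gcd_ne_zero_left hm0⟩, ?_, ?_⟩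
    · rw [Nat.dvd_div_iff_mul_dvd hd2]
      have h4 : d ^ 2 * (a * b / d) = d * (a * b) := by
        rw [pow_two, mul_assoc, Nat.mul_div_cancel' hdab]
      rw [h4]
      have h5 : d ∣ m * n / (a * b) := by
        rw [← Nat.div_mul_div_comm ham hbn]
        exact dvd_mul_of_dvd_left (Nat.gcd_dvd_left _ _) _
      have h6 := (Nat.dvd_div_iff_mul_dvd habmn).mp h5
      rwa [mul_comm] at h6
    · exact (Nat.div_pos (Nat.le_of_dvd (Nat.pos_of_ne_zero hmn0) hd2)
        (by positivity)).ne'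
  · -- backward membership
    rintro ⟨d, e⟩ hy
    simp only [Finset.mem_sigma, Nat.mem_divisors] at hy
    obtain ⟨⟨hdg, -⟩, hede, -⟩ := hy
    have hdm : d ∣ m := hdg.trans (Nat.gcd_dvd_left m n)
    have hdn : d ∣ n := hdg.trans (Nat.gcd_dvd_right m n)
    have hd0 : 0 < d := Nat.pos_of_dvd_of_pos hdm hm
    have hd2 : d ^ 2 ∣ m * n := by rw [pow_two]; exact mul_dvd_mul hdm hdn
    have hd2e : d ^ 2 * e ∣ m * n := (Nat.dvd_div_iff_mul_dvd hd2).mp hede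
    set g := Nat.gcd m (d * e) with hg
    have hgm : g ∣ m := Nat.gcd_dvd_left _ _
    have hgde : g ∣ d * e := Nat.gcd_dvd_right _ _
    have hdg' : d ∣ g := Nat.dvd_gcd hdm (dvd_mul_right d e)
    have hg0 : g ≠ 0 := Nat.gcd_ne_zero_left hm0
    simp only [Finset.mem_product, Nat.mem_divisors]
    refine ⟨⟨(Nat.div_dvd_of_dvd hdg').trans hgm, hm0⟩, ?_, hn0⟩
    have hgd2e : g ∣ d ^ 2 * e := hgde.trans ⟨d, by ring⟩
    rw [Nat.div_dvd_iff_dvd_mul hgd2e (Nat.pos_of_ne_zero hg0)]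
    have h7 : g * n = Nat.gcd (m * n) (d * e * n) := by rw [Nat.gcd_mul_right]
    rw [h7]
    refine Nat.dvd_gcd hd2e ?_
    have h8 := mul_dvd_mul_left (d * e) hdn
    rwa [show d * e * d = d ^ 2 * e by ring] at h8
  · -- left inverse
    rintro ⟨a, b⟩ hab
    simp only [Finset.mem_product, Nat.mem_divisors] at hab
    obtain ⟨⟨ham, -⟩, hbn, -⟩ := hab
    have ha0 : 0 < a := Nat.pos_of_dvd_of_pos ham hm
    have hb0 : 0 < b := Nat.pos_of_dvd_of_pos hbn hn
    set d := Nat.gcd (m / a) b with hd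
    have hd0 : 0 < d := Nat.gcd_pos_of_pos_right _ hb0
    have hdab : d ∣ a * b := Dvd.dvd.mul_left (Nat.gcd_dvd_right _ _) a
    have hcd : d * (a * b / d) = a * b := Nat.mul_div_cancel' hdab
    have hgab : Nat.gcd m (a * b) = a * d := by
      conv_lhs => rw [show m = a * (m / a) from (Nat.mul_div_cancel' ham).symm]
      rw [Nat.gcd_mul_left]
    have c1 : Nat.gcd m (d * (a * b / d)) / d = a := by
      rw [hcd, hgab, Nat.mul_div_cancel _ hd0]
    have c2 : d ^ 2 * (a * b / d) / Nat.gcd m (d * (a * b / d)) = b := by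
      rw [hcd, hgab, show d ^ 2 * (a * b / d) = d * (d * (a * b / d)) by ring, hcd,
        show d * (a * b) = a * d * b by ring, Nat.mul_div_cancel_left _ (by positivity)]
    simp only [Prod.mk.injEq]
    exact ⟨c1, c2⟩
  · -- right inverse
    rintro ⟨d, e⟩ hy
    simp only [Finset.mem_sigma, Nat.mem_divisors] at hy
    obtain ⟨⟨hdg, -⟩, hede, -⟩ := hy
    have hdm : d ∣ m := hdg.trans (Nat.gcd_dvd_left m n)
    have hd0 : 0 < d := Nat.pos_of_dvd_of_pos hdm hm
    set g := Nat.gcd m (d * e) with hgdef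
    have hgm : g ∣ m := Nat.gcd_dvd_left _ _
    have hgde : g ∣ d * e := Nat.gcd_dvd_right _ _
    have hdg' : d ∣ g := Nat.dvd_gcd hdm (dvd_mul_right d e)
    have hg0 : 0 < g := Nat.pos_of_ne_zero (Nat.gcd_ne_zero_left hm0)
    set t := m / g with ht
    set s := d * e / g with hs
    have hmt : g * t = m := Nat.mul_div_cancel' hgm
    have hst : g * s = d * e := Nat.mul_div_cancel' hgde
    have hcop : Nat.Coprime t s := Nat.coprime_div_gcd_div_gcd hg0
    have ha0 : 0 < g / d := Nat.div_pos (Nat.le_of_dvd hg0 hdg') hd0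
    have hma : m / (g / d) = d * t := by
      refine Nat.div_eq_of_eq_mul_left ha0 ?_
      rw [mul_comm d t, mul_assoc, Nat.mul_div_cancel' hdg', mul_comm, hmt]
    have hb : d ^ 2 * e / g = d * s := by
      rw [show d ^ 2 * e = d * (d * e) by ring, Nat.mul_div_assoc d hgde]
    have hgcd : Nat.gcd (d * t) (d * s) = d := by
      rw [Nat.gcd_mul_left, Nat.Coprime.gcd_eq_one hcop, mul_one]
    have c1 : Nat.gcd (m / (g / d)) (d ^ 2 * e / g) = d := by rw [hma, hb, hgcd]
    have c2 : g / d * (d ^ 2 * e / g) / Nat.gcd (m / (g / d)) (d ^ 2 * e / g) = e := by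
      rw [c1, hb, show g / d * (d * s) = d * (g / d) * s by ring, Nat.mul_div_cancel' hdg',
        hst, Nat.mul_div_cancel_left _ hd0]
    exact Sigma.ext c1 (heq_of_eq c2)
  · -- values agree
    rintro ⟨a, b⟩ hab
    simp only [Finset.mem_product, Nat.mem_divisors] at hab
    obtain ⟨⟨ham, -⟩, hbn, -⟩ := hab
    have hdab : Nat.gcd (m / a) b ∣ a * b := Dvd.dvd.mul_left (Nat.gcd_dvd_right _ _) a
    exact (congrArg G (Nat.mul_div_cancel' hdab)).symm
end

section
/- Let $k \geq 1$, let $\psi, \phi$ be Dirichlet characters, let $p$ be prime, and set $\sigma(n) = \sum_{ad=n} \psi(a)\phi(d)d^{k-1}$ (with $\sigma(x) = 0$ if $x \notin \mathbb{Z}_{\geq 1}$). Then for every positive integer $n$: $\sigma(pn) = (\psi(p) + \phi(p)p^{k-1})\sigma(n) - \psi(p)\phi(p)p^{k-1}\sigma(n/p)$. -/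
open Finset

lemma sum_pdvd {M : Type*} [AddCommMonoid M] (p m : ℕ) (hp : p.Prime) (hm : m ≠ 0)
    (f : ℕ → M) :
    ∑ d ∈ (p * m).divisors.filter (fun d => p ∣ d), f d = ∑ e ∈ m.divisors, f (p * e) := by
  refine Finset.sum_nbij' (fun d => d / p) (fun e => p * e) ?_ ?_ ?_ ?_ ?_
  · intro d hd
    simp only [mem_filter, Nat.mem_divisors] at hd
    obtain ⟨⟨hdvd, hne⟩, c, rfl⟩ := hd
    simp only [Nat.mem_divisors]
    rw [Nat.mul_div_cancel_left _ hp.pos]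
    exact ⟨(Nat.mul_dvd_mul_iff_left hp.pos).mp hdvd, hm⟩
  · intro e he
    simp only [Nat.mem_divisors] at he
    simp only [mem_filter, Nat.mem_divisors]
    exact ⟨⟨Nat.mul_dvd_mul_left p he.1, mul_ne_zero hp.ne_zero hm⟩, Dvd.intro e rfl⟩
  · intro d hd
    simp only [mem_filter] at hd
    exact Nat.mul_div_cancel' hd.2
  · intro e _
    exact Nat.mul_div_cancel_left _ hp.pos
  · intro d hd
    rw [Nat.mul_div_cancel' (mem_filter.mp hd).2]

theorem twisted_divisor_sum_hecke_at_prime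
    (k : ℕ) (hk : 1 ≤ k) (N₁ N₂ : ℕ)
    (ψ : DirichletCharacter ℂ N₁) (φ : DirichletCharacter ℂ N₂)
    (p : ℕ) (hp : p.Prime)
    (σ : ℕ → ℂ)
    (hσ : ∀ n : ℕ, σ n = ∑ d ∈ n.divisors, ψ ((n / d : ℕ)) * φ (d : ℕ) * (d : ℂ) ^ (k - 1))
    (n : ℕ) (hn : 0 < n) :
    σ (p * n) = (ψ (p : ℕ) + φ (p : ℕ) * (p : ℂ) ^ (k - 1)) * σ n -
      ψ (p : ℕ) * φ (p : ℕ) * (p : ℂ) ^ (k - 1) * (if p ∣ n then σ (n / p) else 0) := by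
  have hn0 : n ≠ 0 := hn.ne'
  -- part A : divisors of p*n divisible by p
  have keyA : ∑ d ∈ (p * n).divisors.filter (fun d => p ∣ d),
      ψ ((p * n / d : ℕ)) * φ (d : ℕ) * (d : ℂ) ^ (k - 1)
      = φ (p : ℕ) * (p : ℂ) ^ (k - 1) * σ n := by
    rw [sum_pdvd p n hp hn0, hσ n, Finset.mul_sum]
    refine Finset.sum_congr rfl fun d hd => ?_
    rw [Nat.mul_div_mul_left _ _ hp.pos]
    push_cast
    rw [map_mul, mul_pow]
    ring
  -- the set of divisors of p*n not divisible by p equals that of n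
  have hset : (p * n).divisors.filter (fun d => ¬ p ∣ d)
      = n.divisors.filter (fun d => ¬ p ∣ d) := by
    ext d
    simp only [mem_filter, Nat.mem_divisors]
    constructor
    · rintro ⟨⟨hd, _⟩, hpd⟩
      have hcop : Nat.Coprime p d := (hp.coprime_iff_not_dvd).mpr hpd
      exact ⟨⟨(Nat.Coprime.dvd_of_dvd_mul_left hcop.symm hd), hn0⟩, hpd⟩
    · rintro ⟨⟨hd, _⟩, hpd⟩
      exact ⟨⟨hd.mul_left p, mul_ne_zero hp.ne_zero hn0⟩, hpd⟩
  -- R : the sum over divisors of n divisible by p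
  have keyR : ∑ d ∈ n.divisors.filter (fun d => p ∣ d),
      ψ ((n / d : ℕ)) * φ (d : ℕ) * (d : ℂ) ^ (k - 1)
      = if p ∣ n then φ (p : ℕ) * (p : ℂ) ^ (k - 1) * σ (n / p) else 0 := by
    by_cases hpn : p ∣ n
    · rw [if_pos hpn]
      obtain ⟨m, rfl⟩ := hpn
      have hm0 : m ≠ 0 := by rintro rfl; simp at hn0
      rw [sum_pdvd p m hp hm0, Nat.mul_div_cancel_left _ hp.pos, hσ m, Finset.mul_sum]
      refine Finset.sum_congr rfl fun d hd => ?_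
      rw [Nat.mul_div_mul_left _ _ hp.pos]
      push_cast
      rw [map_mul, mul_pow]
      ring
    · rw [if_neg hpn]
      apply Finset.sum_eq_zero
      intro d hd
      simp only [mem_filter, Nat.mem_divisors] at hd
      exact absurd (hd.2.trans hd.1.1) hpn
  -- part B : divisors of p*n not divisible by p
  have keyB : ∑ d ∈ (p * n).divisors.filter (fun d => ¬ p ∣ d),
      ψ ((p * n / d : ℕ)) * φ (d : ℕ) * (d : ℂ) ^ (k - 1)
      = ψ (p : ℕ) * (σ n - (if p ∣ n then φ (p : ℕ) * (p : ℂ) ^ (k - 1) * σ (n / p) else 0)) := by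
    rw [hset, ← keyR]
    have : ∀ d ∈ n.divisors.filter (fun d => ¬ p ∣ d),
        ψ ((p * n / d : ℕ)) * φ (d : ℕ) * (d : ℂ) ^ (k - 1)
        = ψ (p : ℕ) * (ψ ((n / d : ℕ)) * φ (d : ℕ) * (d : ℂ) ^ (k - 1)) := by
      intro d hd
      simp only [mem_filter, Nat.mem_divisors] at hd
      rw [Nat.mul_div_assoc p hd.1.1]
      push_cast
      rw [map_mul]
      ring
    rw [Finset.sum_congr rfl this, ← Finset.mul_sum, hσ n,
      ← Finset.sum_filter_add_sum_filter_not n.divisors (fun d => p ∣ d)]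
    ring
  have := Finset.sum_filter_add_sum_filter_not (p * n).divisors (fun d => p ∣ d)
      (fun d => ψ ((p * n / d : ℕ)) * φ (d : ℕ) * (d : ℂ) ^ (k - 1))
  rw [hσ (p * n), ← this, keyA, keyB]
  by_cases hpn : p ∣ n <;> simp [hpn] <;> ring
end

section
/- Let $n \geq 1$ and let $A, B, x \in \mathbb{C}$ and $Y : \mathbb{Z}_{\geq 1} \to \mathbb{C}$ be arbitrary. Define $X : \mathbb{Z}_{\geq 0} \to \mathbb{C}$ by $X(0) = 1$, $X(1) = A - B x Y(1)$, and $X(e) = A\,X(e-1) - B\,X(e-2)$ for $e \geq 2$. Let $M$ be the $(n+1)\times(n+1)$ matrix (indices $0 \leq i,j \leq n$) with $M_{ij} = X(i-j)$ for $i \geq j$ and $M_{ij} = x^{j-i} Y(j-i)$ for $j > i$. Then $\det M = (1 - X(1)Y(1)x) \cdot (1 - A\,Y(1)\,x + B\,Y(2)\,x^2)^{n-1}$. -/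
open Matrix

private def Mm (X Y : ℕ → ℂ) (x : ℂ) (n : ℕ) : Matrix (Fin (n + 1)) (Fin (n + 1)) ℂ :=
  fun i j =>
    if (j : ℕ) ≤ (i : ℕ) then X ((i : ℕ) - (j : ℕ))
    else x ^ ((j : ℕ) - (i : ℕ)) * Y ((j : ℕ) - (i : ℕ))

private lemma key_step
    (A B x : ℂ) (Y : ℕ → ℂ) (X : ℕ → ℂ)
    (hX0 : X 0 = 1)
    (hX1 : X 1 = A - B * x * Y 1)
    (hXe : ∀ e : ℕ, 2 ≤ e → X e = A * X (e - 1) - B * X (e - 2))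
    (m : ℕ) :
    (Mm X Y x (m + 2)).det =
      (1 - A * Y 1 * x + B * Y 2 * x ^ 2) * (Mm X Y x (m + 1)).det := by
  set c : ℂ := 1 - A * Y 1 * x + B * Y 2 * x ^ 2 with hc
  set M := Mm X Y x (m + 2) with hM
  set lst : Fin (m + 3) := Fin.last (m + 2) with hlst
  set r1 : Fin (m + 3) := ⟨m + 1, by omega⟩ with hr1
  set r2 : Fin (m + 3) := ⟨m, by omega⟩ with hr2
  have hne1 : lst ≠ r1 := by simp [hlst, hr1, Fin.ext_iff, Fin.last]
  have hne2 : lst ≠ r2 := by simp [hlst, hr2, Fin.ext_iff, Fin.last]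
  set M' : Matrix (Fin (m + 3)) (Fin (m + 3)) ℂ :=
    updateRow M lst (fun j => M lst j - A * M r1 j + B * M r2 j) with hM'
  have hdet : M'.det = M.det := by
    have h1 := det_updateRow_add_smul_self M hne1 (-A)
    have h2 := det_updateRow_add_smul_self (updateRow M lst (M lst + (-A) • M r1)) hne2 B
    rw [h1] at h2
    rw [← h2]
    congr 1
    ext i j
    by_cases hi : i = lst
    · subst hi
      rw [hM']
      simp [updateRow_self, updateRow_ne hne2.symm]
      ring
    · rw [hM']
      simp [updateRow_ne hi]
  -- entries of the new last row
  have hrow : ∀ j : Fin (m + 3), M' lst j = if j = lst then c else 0 := by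
    intro j
    have hMval : ∀ i : Fin (m + 3), M i j =
        (if (j : ℕ) ≤ (i : ℕ) then X ((i : ℕ) - (j : ℕ))
          else x ^ ((j : ℕ) - (i : ℕ)) * Y ((j : ℕ) - (i : ℕ))) := fun i => rfl
    have hj3 : (j : ℕ) < m + 3 := j.isLt
    rw [hM', updateRow_self]
    by_cases hjl : j = lst
    · subst hjl
      rw [hMval, hMval, hMval]
      simp only [hMval, hlst, hr1, hr2, Fin.val_last, if_pos]
      rw [if_pos le_rfl, if_neg (by omega), if_neg (by omega)]
      simp only [Nat.sub_self]
      have e1 : m + 2 - (m + 1) = 1 := by omega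
      have e2 : m + 2 - m = 2 := by omega
      rw [e1, e2, hX0, hc]
      ring
    · rw [if_neg hjl]
      have hjlt : (j : ℕ) ≤ m + 1 := by
        have : (j : ℕ) ≠ m + 2 := fun h => hjl (Fin.ext (by simp [hlst, h]))
        omega
      by_cases hj1 : (j : ℕ) = m + 1
      · simp only [hMval, hlst, hr1, hr2, Fin.val_last]
        rw [if_pos (by omega), if_pos (by omega), if_neg (by omega), hj1]
        have e1 : m + 2 - (m + 1) = 1 := by omega
        rw [e1, Nat.sub_self]
        have e2 : m + 1 - m = 1 := by omega
        rw [e2, hX0, hX1, pow_one]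
        ring
      · have hjm : (j : ℕ) ≤ m := by omega
        simp only [hMval, hlst, hr1, hr2, Fin.val_last]
        rw [if_pos (by omega), if_pos (by omega), if_pos (by omega)]
        have h2e : 2 ≤ m + 2 - (j : ℕ) := by omega
        have := hXe (m + 2 - (j : ℕ)) h2e
        have e1 : m + 2 - (j : ℕ) - 1 = m + 1 - (j : ℕ) := by omega
        have e2 : m + 2 - (j : ℕ) - 2 = m - (j : ℕ) := by omega
        rw [e1, e2] at this
        rw [this]; ring
  -- submatrix is Mm (m+1)
  have hsub : M'.submatrix lst.succAbove lst.succAbove = Mm X Y x (m + 1) := by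
    ext i j
    have hlt : (Fin.castSucc i) ≠ lst := by
      simp [hlst, Fin.ext_iff, Fin.last]; omega
    simp only [submatrix_apply, hlst, Fin.succAbove_last]
    rw [hM', updateRow_ne (by simpa [hlst] using hlt)]
    rfl
  rw [← hdet, det_succ_row M' lst]
  rw [Finset.sum_eq_single lst]
  · rw [hrow lst, if_pos rfl, hsub]
    have : ((-1 : ℂ)) ^ ((lst : ℕ) + (lst : ℕ)) = 1 :=
      Even.neg_one_pow ⟨(lst : ℕ), rfl⟩
    rw [this]; ring
  · intro j _ hj
    rw [hrow j, if_neg hj]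
    ring
  · intro h; exact absurd (Finset.mem_univ lst) h

theorem det_toeplitz_recurrence
    (n : ℕ) (hn : 1 ≤ n) (A B x : ℂ) (Y : ℕ → ℂ)
    (X : ℕ → ℂ)
    (hX0 : X 0 = 1)
    (hX1 : X 1 = A - B * x * Y 1)
    (hXe : ∀ e : ℕ, 2 ≤ e → X e = A * X (e - 1) - B * X (e - 2)) :
    Matrix.det (fun i j : Fin (n + 1) =>
      if (j : ℕ) ≤ (i : ℕ) then X ((i : ℕ) - (j : ℕ))
      else x ^ ((j : ℕ) - (i : ℕ)) * Y ((j : ℕ) - (i : ℕ))) =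
      (1 - X 1 * Y 1 * x) * (1 - A * Y 1 * x + B * Y 2 * x ^ 2) ^ (n - 1) := by
  have main : ∀ m : ℕ, (Mm X Y x (m + 1)).det =
      (1 - X 1 * Y 1 * x) * (1 - A * Y 1 * x + B * Y 2 * x ^ 2) ^ m := by
    intro m
    induction m with
    | zero =>
      rw [show Mm X Y x 1 = !![X 0, x ^ 1 * Y 1; X 1, X 0] by
        ext i j; fin_cases i <;> fin_cases j <;> simp [Mm]]
      rw [det_fin_two_of, hX0, pow_zero, pow_one]
      ring
    | succ k ih =>
      rw [key_step A B x Y X hX0 hX1 hXe k, ih, pow_succ]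
      ring
  obtain ⟨m, rfl⟩ : ∃ m, n = m + 1 := ⟨n - 1, (by omega)⟩
  have := main m
  simp only [Nat.add_sub_cancel]; exact this
end
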